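/- In the above setup (only the norm condition (Property 2) on the aggregation outputs is assumed), for every benign agent i ∈ {1,…,H} and every t ∈ ℕ it holds that ‖λ_i^{t+1/2}‖ ≤ ψ/θ and ‖λ_i^{t+1}‖ ≤ ψ/θ. -/

import Mathlib

/-- **Boundedness of the benign dual variables under the norm condition
(Property 2) of the robust aggregation rule (Lemma 2).** -/
theorem dual_variables_bounded_byzantine
    (d H M : ℕ) (hH : 1 ≤ H) (hHM : H ≤ M)
    (β θ : ℝ) (hβ : 0 < β) (hθ : 0 < θ) (hβθ : β * θ ≤ 1)
    (ψ : ℝ) (hψ : 0 ≤ ψ)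
    (g : Fin H → ℕ → EuclideanSpace ℝ (Fin d))
    (hg : ∀ i t, ‖g i t‖ ≤ ψ)
    (lam lamhalf : Fin H → ℕ → EuclideanSpace ℝ (Fin d))
    (hlam0 : ∀ i, lam i 0 = 0)
    (hlamhalf : ∀ i t,
      lamhalf i t = (1 - β * θ) • lam i t + (β * ((H : ℝ) / M)) • g i t)
    (S : Fin H → Finset (Fin H)) (hS : ∀ i, (S i).Nonempty)
    (hProp2 : ∀ i t,
      ‖lam i (t + 1)‖ ≤ (S i).sup' (hS i) fun j => ‖lamhalf j t‖) :
    ∀ i t, ‖lamhalf i t‖ ≤ ψ / θ ∧ ‖lam i (t + 1)‖ ≤ ψ / θ := by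
  have hM : (0:ℝ) < M := by
    have : (0:ℕ) < M := lt_of_lt_of_le hH hHM
    exact_mod_cast this
  have hHM' : (H:ℝ) / M ≤ 1 := by
    rw [div_le_one hM]; exact_mod_cast hHM
  have hHM0 : (0:ℝ) ≤ (H:ℝ) / M := by positivity
  have key : ∀ t i, ‖lam i t‖ ≤ ψ / θ := by
    intro t
    induction t with
    | zero => intro i; simp [hlam0]; positivity
    | succ t ih =>
      intro i
      have half : ∀ j, ‖lamhalf j t‖ ≤ ψ / θ := by
        intro j
        rw [hlamhalf]
        calc ‖(1 - β * θ) • lam j t + (β * ((H : ℝ) / M)) • g j t‖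
            ≤ ‖(1 - β * θ) • lam j t‖ + ‖(β * ((H : ℝ) / M)) • g j t‖ :=
              norm_add_le _ _
          _ = |1 - β * θ| * ‖lam j t‖ + |β * ((H : ℝ) / M)| * ‖g j t‖ := by
              rw [norm_smul, norm_smul, Real.norm_eq_abs, Real.norm_eq_abs]
          _ ≤ (1 - β * θ) * (ψ / θ) + (β * ((H : ℝ) / M)) * ψ := by
              have h1 : |1 - β * θ| = 1 - β * θ := abs_of_nonneg (by linarith)
              have h2 : |β * ((H : ℝ) / M)| = β * ((H : ℝ) / M) :=
                abs_of_nonneg (by positivity)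
              rw [h1, h2]
              gcongr
              · exact ih j
              · exact hg j t
          _ ≤ (1 - β * θ) * (ψ / θ) + β * ψ := by nlinarith [mul_le_mul_of_nonneg_left hHM' (mul_nonneg hβ.le hψ)]
          _ = ψ / θ := by field_simp; ring
      calc ‖lam i (t + 1)‖ ≤ (S i).sup' (hS i) fun j => ‖lamhalf j t‖ :=
            hProp2 i t
        _ ≤ ψ / θ := Finset.sup'_le _ _ fun j _ => half j
  intro i t
  constructor
  · rw [hlamhalf]
    calc ‖(1 - β * θ) • lam i t + (β * ((H : ℝ) / M)) • g i t‖
        ≤ ‖(1 - β * θ) • lam i t‖ + ‖(β * ((H : ℝ) / M)) • g i t‖ :=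
          norm_add_le _ _
      _ = |1 - β * θ| * ‖lam i t‖ + |β * ((H : ℝ) / M)| * ‖g i t‖ := by
          rw [norm_smul, norm_smul, Real.norm_eq_abs, Real.norm_eq_abs]
      _ ≤ (1 - β * θ) * (ψ / θ) + (β * ((H : ℝ) / M)) * ψ := by
          have h1 : |1 - β * θ| = 1 - β * θ := abs_of_nonneg (by linarith)
          have h2 : |β * ((H : ℝ) / M)| = β * ((H : ℝ) / M) :=
            abs_of_nonneg (by positivity)
          rw [h1, h2]
          gcongr
          · exact key t i
          · exact hg i t
      _ ≤ (1 - β * θ) * (ψ / θ) + β * ψ := by nlinarith [mul_le_mul_of_nonneg_left hHM' (mul_nonneg hβ.le hψ)]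
      _ = ψ / θ := by field_simp; ring
  · exact key (t + 1) i
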